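/- A proposer who is unmatched in an action profile producing a stable match cannot unilaterally deviate to affect the outcome of any agent, including themselves: if a is an action profile such that the resulting match μ(a) is stable and proposer P_i is unmatched under μ(a), then for every alternative action a_i' ∈ A ∪ {∅}, the action profile (a_i', a_{-i}) obtained by replacing a_i with a_i' satisfies μ((a_i', a_{-i})) = μ(a); in particular P_i remains unmatched. -/

import Mathlib

set_option linter.unusedSectionVars false
/-- A two-sided matching market with proposers `P` and acceptors `A`.
`OP i` is proposer `i`'s preference function over `A ∪ {∅}` (where `none` is `∅`),
and `OA j` is acceptor `j`'s preference function over `P ∪ {∅}`. -/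
structure Market (P A : Type) [Fintype P] [Fintype A] where
  OP : P → Option A → ℝ
  OA : A → Option P → ℝ
  OP_inj : ∀ i, Function.Injective (OP i)
  OA_inj : ∀ j, Function.Injective (OA j)
  OP_none : ∀ i, OP i none = 0
  OA_none : ∀ j, OA j none = 0
  OP_pos : ∀ i j, 0 < OP i (some j)
  OA_pos : ∀ j i, 0 < OA j (some i)
  OP_le_one : ∀ i o, OP i o ≤ 1
  OA_le_one : ∀ j o, OA j o ≤ 1

/-- A match: each proposer gets a partner in `A ∪ {∅}`, each acceptor a partner
in `P ∪ {∅}`, consistently. -/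
structure Matching (P A : Type) where
  μP : P → Option A
  μA : A → Option P
  consistent : ∀ i j, μP i = some j ↔ μA j = some i

/-- A match is stable if there is no proposer–acceptor pair who strictly prefer
each other to their assigned partners. -/
def Stable {P A : Type} [Fintype P] [Fintype A] (M : Market P A) (μ : Matching P A) : Prop :=
  ¬ ∃ (i : P) (j : A), M.OP i (some j) > M.OP i (μ.μP i) ∧ M.OA j (some i) > M.OA j (μ.μA j)

variable {P A : Type} [Fintype P] [Fintype A] [DecidableEq P] [DecidableEq A]

/-- Given an action profile `a`, acceptor `j` accepts its most preferred
proposer among those proposing to it (if any). -/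
noncomputable def accept (M : Market P A) (a : P → Option A) (j : A) : Option P :=
  if h : (Finset.univ.filter fun i => a i = some j).Nonempty then
    some (Classical.choose
      ((Finset.univ.filter fun i => a i = some j).exists_max_image
        (fun i => M.OA j (some i)) h))
  else none

theorem accept_spec {M : Market P A} {a : P → Option A} {j : A} {i : P}
    (h : accept M a j = some i) :
    a i = some j ∧ ∀ i', a i' = some j → M.OA j (some i') ≤ M.OA j (some i) := by
  unfold accept at h
  split_ifs at h with hne
  · obtain ⟨hmem, hmax⟩ := Classical.choose_spec
      ((Finset.univ.filter fun i => a i = some j).exists_max_image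
        (fun i => M.OA j (some i)) hne)
    have hi : Classical.choose
        ((Finset.univ.filter fun i => a i = some j).exists_max_image
          (fun i => M.OA j (some i)) hne) = i := Option.some_injective _ h
    rw [hi] at hmem hmax
    refine ⟨by simpa using hmem, fun i' hi' => hmax i' (by simpa using hi')⟩

theorem accept_of_propose {M : Market P A} {a : P → Option A} {j : A} {i : P}
    (h : a i = some j) : ∃ i', accept M a j = some i' := by
  unfold accept
  have hne : (Finset.univ.filter fun i => a i = some j).Nonempty :=
    ⟨i, by simpa using h⟩
  rw [dif_pos hne]
  exact ⟨_, rfl⟩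

/-- The match resulting from an action profile `a`. -/
noncomputable def matchOf (M : Market P A) (a : P → Option A) : Matching P A where
  μP i := (a i).bind fun j => if accept M a j = some i then some j else none
  μA j := accept M a j
  consistent := by
    intro i j
    constructor
    · intro h
      rcases Option.bind_eq_some_iff.mp h with ⟨j', hj', hif⟩
      by_cases hc : accept M a j' = some i
      · rw [if_pos hc] at hif
        exact (Option.some_injective _ hif) ▸ hc
      · rw [if_neg hc] at hif
        exact absurd hif (by simp)
    · intro h
      have hai : a i = some j := (accept_spec h).1
      show (a i).bind _ = some j
      rw [hai]
      simp [h]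

/-- The utility of proposer `i` under action profile `a`. -/
noncomputable def util (M : Market P A) (a : P → Option A) (i : P) : ℝ :=
  M.OP i ((matchOf M a).μP i)

/-- Pure Nash equilibrium: no proposer can strictly increase its utility by a
unilateral deviation. -/
def IsNash (M : Market P A) (a : P → Option A) : Prop :=
  ∀ (i : P) (a' : Option A), util M (Function.update a i a') i ≤ util M a i

/-- An unmatched proposer in an action profile producing a stable match cannot
unilaterally deviate to change the outcome of any agent, including themselves. -/
theorem unmatched_cannot_affect [Nonempty P] [Nonempty A]
    (M : Market P A) (a : P → Option A)
    (hstable : Stable M (matchOf M a))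
    (i : P) (hunmatched : (matchOf M a).μP i = none) :
    ∀ a' : Option A, matchOf M (Function.update a i a') = matchOf M a := by
  intro b
  -- every acceptor's current partner strictly beats i
  have key : ∀ j : A, ∃ i₀ : P, accept M a j = some i₀ ∧ i₀ ≠ i ∧
      M.OA j (some i) < M.OA j (some i₀) := by
    intro j
    have hns := hstable
    unfold Stable at hns
    push_neg at hns
    have h1 : M.OP i (some j) > M.OP i ((matchOf M a).μP i) := by
      rw [hunmatched, M.OP_none]; exact M.OP_pos i j
    have h2 : M.OA j (some i) ≤ M.OA j ((matchOf M a).μA j) := hns i j h1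
    have hμA : (matchOf M a).μA j = accept M a j := rfl
    rcases ho : accept M a j with _ | i₀
    · rw [hμA, ho, M.OA_none] at h2
      exact absurd (M.OA_pos j i) (not_lt.mpr h2)
    · rw [hμA, ho] at h2
      have hne : i₀ ≠ i := by
        intro hei
        have hμ : (matchOf M a).μA j = some i := by rw [hμA, ho, hei]
        have := ((matchOf M a).consistent i j).mpr hμ
        rw [hunmatched] at this
        cases this
      refine ⟨i₀, rfl, hne, lt_of_le_of_ne h2 ?_⟩
      intro heq
      exact hne (Option.some_inj.mp (M.OA_inj j heq.symm))
  set a' := Function.update a i b with ha'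
  -- accept is unchanged
  have hacc : ∀ j : A, accept M a' j = accept M a j := by
    intro j
    obtain ⟨i₀, ho, hne, hlt⟩ := key j
    have hprop₀ : a i₀ = some j := (accept_spec ho).1
    have hprop₀' : a' i₀ = some j := by
      rw [ha', Function.update_of_ne hne]; exact hprop₀
    obtain ⟨i₁, h₁⟩ := accept_of_propose (M := M) hprop₀'
    obtain ⟨hprop₁, hmax₁⟩ := accept_spec h₁
    have hle₀ : M.OA j (some i₀) ≤ M.OA j (some i₁) := hmax₁ i₀ hprop₀'
    have hne₁ : i₁ ≠ i := by
      rintro rfl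
      exact absurd hlt (not_lt.mpr hle₀)
    have hprop₁a : a i₁ = some j := by
      rw [ha', Function.update_of_ne hne₁] at hprop₁; exact hprop₁
    have hle₁ : M.OA j (some i₁) ≤ M.OA j (some i₀) := (accept_spec ho).2 i₁ hprop₁a
    have : i₁ = i₀ := by
      have := M.OA_inj j (le_antisymm hle₁ hle₀)
      exact Option.some_inj.mp this
    rw [h₁, this, ho]
  -- μP unchanged
  have hμP : (matchOf M a').μP = (matchOf M a).μP := by
    funext k
    by_cases hk : k = i
    · subst hk
      rw [hunmatched]
      show (a' k).bind _ = none
      rcases hb : a' k with _ | j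
      · rfl
      · obtain ⟨i₀, ho, hne, _⟩ := key j
        rw [Option.bind_eq_none_iff]
        intro x hx
        obtain rfl := Option.some_inj.mp hx
        rw [hacc j, ho, if_neg (by simp [hne])]
    · show (a' k).bind _ = (a k).bind _
      rw [ha', Function.update_of_ne hk]
      congr 1
      funext j
      rw [hacc j]
  have hμA : (matchOf M a').μA = (matchOf M a).μA := funext hacc
  cases h1 : matchOf M a' with
  | mk p1 q1 c1 =>
    cases h2 : matchOf M a with
    | mk p2 q2 c2 =>
      rw [h1, h2] at hμP hμA
      simp only at hμP hμA
      subst hμP hμA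
      rfl
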